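/- Neither the countably infinite complete graph K^{ℵ₀} nor the Farey graph is strongly immersed in the halved Farey graph. -/

import Mathlib

open SimpleGraph

/-- Two walks (with arbitrary endpoints) are edge-disjoint. -/
def EdgeDisjW {V : Type*} {G : SimpleGraph V} {a b c d : V}
    (p : G.Walk a b) (q : G.Walk c d) : Prop :=
  ∀ e, e ∈ p.edges → e ∉ q.edges

/-- A graph is infinitely edge-connected: it has at least two vertices and
between any two distinct vertices there are infinitely many pairwise
edge-disjoint paths. -/
def InfEdgeConn {V : Type*} (G : SimpleGraph V) : Prop :=
  (∃ u v : V, u ≠ v) ∧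
    ∀ u v : V, u ≠ v →
      ∃ P : ℕ → G.Walk u v,
        (∀ n, (P n).IsPath) ∧ ∀ m n, m ≠ n → EdgeDisjW (P m) (P n)

/-- Infinite edge-connectivity of the subgraph spanned by a vertex set `S`
(used for graphs of the form "union of a family of paths", whose abstract
vertex set is `S`). -/
def InfEdgeConnOn {V : Type*} (G : SimpleGraph V) (S : Set V) : Prop :=
  (∃ u ∈ S, ∃ v ∈ S, u ≠ v) ∧
    ∀ u ∈ S, ∀ v ∈ S, u ≠ v →
      ∃ P : ℕ → G.Walk u v,
        (∀ n, (P n).IsPath) ∧ ∀ m n, m ≠ n → EdgeDisjW (P m) (P n)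

/-- `α` together with the family of paths `P` (one for each edge of `H`)
is a strong immersion of `H` in `G`. -/
def IsStrongImmersion {VH VG : Type*} (H : SimpleGraph VH) (G : SimpleGraph VG)
    (α : VH → VG) (P : ∀ ⦃u v : VH⦄, H.Adj u v → G.Walk (α u) (α v)) : Prop :=
  Function.Injective α ∧
  (∀ ⦃u v : VH⦄ (h : H.Adj u v), (P h).IsPath) ∧
  (∀ ⦃u v u' v' : VH⦄ (h : H.Adj u v) (h' : H.Adj u' v'),
      s(u, v) ≠ s(u', v') → EdgeDisjW (P h) (P h')) ∧
  (∀ ⦃u v : VH⦄ (h : H.Adj u v), ∀ w ∈ (P h).support,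
      (∃ z, α z = w) → w = α u ∨ w = α v)

/-- `H` is strongly immersed in `G`. -/
def StronglyImmersed {VH VG : Type*} (H : SimpleGraph VH) (G : SimpleGraph VG) : Prop :=
  ∃ α P, IsStrongImmersion H G α P

/-- `β` together with the family of paths `P` witnesses that `G` contains
a subdivision of `H`: the paths are internally disjoint and have no internal
vertex among the branch vertices. -/
def IsSubdivision {VH VG : Type*} (H : SimpleGraph VH) (G : SimpleGraph VG)
    (β : VH → VG) (P : ∀ ⦃u v : VH⦄, H.Adj u v → G.Walk (β u) (β v)) : Prop :=
  Function.Injective β ∧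
  (∀ ⦃u v : VH⦄ (h : H.Adj u v), (P h).IsPath) ∧
  (∀ ⦃u v u' v' : VH⦄ (h : H.Adj u v) (h' : H.Adj u' v'),
      s(u, v) ≠ s(u', v') → ∀ w, w ∈ (P h).support → w ∈ (P h').support →
        (w = β u ∨ w = β v) ∧ (w = β u' ∨ w = β v')) ∧
  (∀ ⦃u v : VH⦄ (h : H.Adj u v), ∀ w ∈ (P h).support,
      (∃ z, β z = w) → w = β u ∨ w = β v)

/-- `H` is a topological minor of `G`. -/
def TopMinor {VH VG : Type*} (H : SimpleGraph VH) (G : SimpleGraph VG) : Prop :=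
  ∃ β P, IsSubdivision H G β P

/-- The dyadic rationals of the unit interval: the vertices of the halved
Farey graph. -/
def DyadicSet : Set ℚ := {q | ∃ n k : ℕ, k ≤ 2 ^ n ∧ q = (k : ℚ) / 2 ^ n}

/-- The halved Farey graph: two dyadic rationals of `[0,1]` are adjacent iff
they are of the form `k/2^n` and `(k+1)/2^n`. -/
def halvedFarey : SimpleGraph DyadicSet where
  Adj a b := a ≠ b ∧ ∃ n k : ℕ, k + 1 ≤ 2 ^ n ∧
    ((a.1 = (k : ℚ) / 2 ^ n ∧ b.1 = ((k : ℚ) + 1) / 2 ^ n) ∨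
     (b.1 = (k : ℚ) / 2 ^ n ∧ a.1 = ((k : ℚ) + 1) / 2 ^ n))
  symm := by
    refine ⟨?_⟩
    rintro a b ⟨hne, n, k, hk, h⟩
    exact ⟨hne.symm, n, k, hk, h.symm⟩
  loopless := by refine ⟨?_⟩; rintro a ⟨hne, -⟩; exact hne rfl

/-- Adjacency in the Farey graph on `ℚ ∪ {∞}` (`none` is `∞ = ±1/0`). -/
def fareyAdj : Option ℚ → Option ℚ → Prop
  | some q, some r =>
      q.num * (r.den : ℤ) - r.num * (q.den : ℤ) = 1 ∨
      q.num * (r.den : ℤ) - r.num * (q.den : ℤ) = -1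
  | some q, none => q.den = 1
  | none, some r => r.den = 1
  | none, none => False

/-- The Farey graph. -/
def fareyGraph : SimpleGraph (Option ℚ) where
  Adj := fareyAdj
  symm := by
    refine ⟨?_⟩
    rintro (_ | q) (_ | r) h <;> simp only [fareyAdj] at * <;> omega
  loopless := by
    refine ⟨?_⟩
    rintro (_ | q) h <;> simp only [fareyAdj] at h <;> omega
/-- `u` occurs strictly before `v` on the list `l`. -/
def Before {V : Type*} (l : List V) (u v : V) : Prop := List.Sublist [u, v] l

/-- `l` is the (consecutive) portion of the list `R` starting at `u` and
ending at `v`. -/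
def IsPortion {V : Type*} (R : List V) (u v : V) (l : List V) : Prop :=
  (∃ pre post, R = pre ++ l ++ post) ∧ l.head? = some u ∧ l.getLast? = some v

/-- The union of a family of walks, as a graph on the ambient vertex set
(its abstract vertex set is `walkSupp P`). -/
def walkUnion {V : Type*} {G : SimpleGraph V} {x y : V}
    (P : ℕ → G.Walk x y) : SimpleGraph V where
  Adj u v := ∃ n, s(u, v) ∈ (P n).edges
  symm := by
    refine ⟨?_⟩
    rintro u v ⟨n, h⟩
    exact ⟨n, by rwa [Sym2.eq_swap]⟩
  loopless := by
    refine ⟨?_⟩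
    rintro v ⟨n, h⟩
    exact G.loopless.irrefl v ((P n).edges_subset_edgeSet h)

/-- The vertices appearing on some walk of the family. -/
def walkSupp {V : Type*} {G : SimpleGraph V} {x y : V}
    (P : ℕ → G.Walk x y) : Set V := {v | ∃ n, v ∈ (P n).support}

/-- An `x`–`y` grain line in `G`. -/
structure GrainLine {V : Type*} (G : SimpleGraph V) (x y : V) where
  ne_xy : x ≠ y
  /-- The limit set `L`. -/
  L : Set V
  /-- The linear order `≤_L` on `L`. -/
  le : V → V → Prop
  /-- The pairwise edge-disjoint `x`–`y` paths. -/
  P : ℕ → G.Walk x y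
  isPath : ∀ n, (P n).IsPath
  edgeDisj : ∀ m n, m ≠ n → EdgeDisjW (P m) (P n)
  le_refl : ∀ v ∈ L, le v v
  le_trans : ∀ u ∈ L, ∀ v ∈ L, ∀ w ∈ L, le u v → le v w → le u w
  le_antisymm : ∀ u ∈ L, ∀ v ∈ L, le u v → le v u → u = v
  le_total : ∀ u ∈ L, ∀ v ∈ L, le u v ∨ le v u
  x_mem : x ∈ L
  y_mem : y ∈ L
  x_min : ∀ v ∈ L, le x v
  y_max : ∀ v ∈ L, le v y
  /-- (GL1): `L` is the set of vertices lying on a final segment of the paths. -/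
  gl1 : ∀ v : V, v ∈ L ↔ ∃ N : ℕ, ∀ n : ℕ, v ∈ (P n).support ↔ N ≤ n
  /-- (GL2): a vertex of some path not in `L` lies on no other path. -/
  gl2 : ∀ n : ℕ, ∀ v ∈ (P n).support, v ∉ L → ∀ m : ℕ, m ≠ n → v ∉ (P m).support
  /-- (GL3): for `n ≥ 1`, the path `P n` traverses the vertices of `L_{<n}`
  in the order given by `≤_L`. -/
  gl3 : ∀ n : ℕ, 1 ≤ n → ∀ u v : V, u ∈ L → v ∈ L →
      (∃ m < n, u ∈ (P m).support) → (∃ m < n, v ∈ (P m).support) →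
      u ≠ v → (le u v ↔ Before (P n).support u v)

namespace GrainLine

variable {V : Type*} {G : SimpleGraph V} {x y : V}

/-- The graph `⋃𝒫` defined by the grain line. -/
def union (gl : GrainLine G x y) : SimpleGraph V := walkUnion gl.P

/-- The vertex set of `⋃𝒫`. -/
def supp (gl : GrainLine G x y) : Set V := walkSupp gl.P

/-- The set `L_{<n}` of vertices of `L` of depth `< n`. -/
def Llt (gl : GrainLine G x y) (n : ℕ) : Set V :=
  {v | v ∈ gl.L ∧ ∃ m < n, v ∈ (gl.P m).support}

/-- The `𝒫`-depth of a vertex. -/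
noncomputable def vDepth (gl : GrainLine G x y) (v : V) : ℕ :=
  sInf {n | v ∈ (gl.P n).support}

/-- The `𝒫`-depth of an edge. -/
noncomputable def eDepth (gl : GrainLine G x y) (e : Sym2 V) : ℕ :=
  sInf {n | e ∈ (gl.P n).edges}

/-- `u` and `v` are the ends of a `𝒫`-segment of depth `d`: both lie in
`L_{<d}` and `v` is the successor of `u` in `(L_{<d}, ≤_L)`. -/
def IsSegEnds (gl : GrainLine G x y) (d : ℕ) (u v : V) : Prop :=
  u ∈ gl.Llt d ∧ v ∈ gl.Llt d ∧ u ≠ v ∧ gl.le u v ∧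
    ∀ z ∈ gl.Llt d, gl.le u z → gl.le z v → z = u ∨ z = v

/-- The grain line is well-structured: every vertex of a `𝒫`-segment
`u P_d v` lying in `L` belongs to the interval `[u,v]` of `(L, ≤_L)`. -/
def WellStructured (gl : GrainLine G x y) : Prop :=
  ∀ d u v, gl.IsSegEnds d u v →
    ∀ w ∈ gl.L, (w = u ∨ w = v ∨ List.Sublist [u, w, v] (gl.P d).support) →
      gl.le u w ∧ gl.le w v

/-- The grain line is free: the graph `⋃𝒫` it defines is infinitely
edge-connected. -/
def Free (gl : GrainLine G x y) : Prop := InfEdgeConnOn gl.union gl.supp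

/-- The grain line is wildly presented. -/
def WildlyPresented (gl : GrainLine G x y) : Prop :=
  ∀ n : ℕ, 1 ≤ n → ∀ u v : V, u ∈ gl.Llt n → v ∈ gl.Llt n → u ≠ v → gl.le u v →
    ∃ w ∈ gl.L, w ≠ u ∧ w ≠ v ∧ gl.le u w ∧ gl.le w v ∧
      List.Sublist [u, w, v] (gl.P n).support

end GrainLine

/-- `G` is a generalised halved Farey graph: it is defined by a grain line
satisfying (GL2') and (GL3'). -/
def IsGenHalvedFarey {V : Type*} (G : SimpleGraph V) : Prop :=
  ∃ (x y : V) (gl : GrainLine G x y),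
    (∀ v : V, v ∈ gl.L) ∧
    (∀ u v : V, gl.le u v ↔ (u = v ∨ ∃ n, Before (gl.P n).support u v)) ∧
    (∀ u v : V, G.Adj u v ↔ ∃ n, s(u, v) ∈ (gl.P n).edges)
/-- `{A, B}` is a compound-separation of `G`. -/
def IsCompoundSep {V : Type*} (G : SimpleGraph V) (A B : Set V) : Prop :=
  A ∪ B = Set.univ ∧ (A \ B).Nonempty ∧ (B \ A).Nonempty ∧ (A ∩ B).Finite ∧
    {p : V × V | G.Adj p.1 p.2 ∧ p.1 ∈ A \ B ∧ p.2 ∈ B \ A}.Finite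

/-- The separation `{A, B}` separates the vertices `u` and `v`. -/
def SepPair {V : Type*} (A B : Set V) (u v : V) : Prop :=
  (u ∈ A \ B ∧ v ∈ B \ A) ∨ (u ∈ B \ A ∧ v ∈ A \ B)

/-- The compound-separation `{A, B}` separates `u` and `v` minimally. -/
def MinSeps {V : Type*} (G : SimpleGraph V) (A B : Set V) (u v : V) : Prop :=
  SepPair A B u v ∧
    ∀ C D : Set V, IsCompoundSep G C D → C ∩ D ⊂ A ∩ B → ¬ SepPair C D u v

/-- `{A, B}` is a unitary compound-separation of `G` with separator `w`. -/
def IsUnitaryCSep {V : Type*} (G : SimpleGraph V) (A B : Set V) (w : V) : Prop :=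
  IsCompoundSep G A B ∧ A ∩ B = {w}

/-- `w` is a compound-cutvertex of `G`. -/
def IsCompoundCutvertex {V : Type*} (G : SimpleGraph V) (w : V) : Prop :=
  ∃ A B, IsUnitaryCSep G A B w

/-- `G` is `k`-compound-connected: no compound-separation of order `< k`
separates any two vertices. -/
def kCompConn {V : Type*} (G : SimpleGraph V) (k : ℕ) : Prop :=
  ∀ A B : Set V, IsCompoundSep G A B → (A ∩ B).ncard < k →
    ∀ u v : V, ¬ SepPair A B u v

/-- `u` and `v` cannot be separated by deleting finitely many edges. -/
def FinEdgeConn {V : Type*} (G : SimpleGraph V) (u v : V) : Prop :=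
  ∀ F : Set (Sym2 V), F.Finite → (G.deleteEdges F).Reachable u v

/-- `G` is a Π-graph: it is infinitely edge-connected but has no two vertices
linked by infinitely many pairwise internally disjoint paths. -/
def PiGraph {V : Type*} (G : SimpleGraph V) : Prop :=
  InfEdgeConn G ∧
    ∀ u v : V, u ≠ v →
      ¬ ∃ P : ℕ → G.Walk u v, (∀ n, (P n).IsPath) ∧
          ∀ m n, m ≠ n → ∀ w ∈ (P m).support, w ∈ (P n).support → w = u ∨ w = v

/-- `H` is a `k`-bounded minor of `G`: there are disjoint nonempty connected
branch sets of size `< k`. -/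
def IsBddMinor {VH VG : Type*} (H : SimpleGraph VH) (G : SimpleGraph VG) (k : ℕ) : Prop :=
  ∃ B : VH → Set VG,
    (∀ h, (B h).Nonempty) ∧
    (∀ h, (B h).Finite ∧ (B h).ncard < k) ∧
    (∀ h h', h ≠ h' → Disjoint (B h) (B h')) ∧
    (∀ h, (G.induce (B h)).Connected) ∧
    (∀ h h', H.Adj h h' → ∃ a ∈ B h, ∃ b ∈ B h', G.Adj a b)

/-- The order on oriented separations: `(A,B) ≤ (C,D)` iff `A ⊆ C` and `D ⊆ B`. -/
def osLE {V : Type*} (s t : Set V × Set V) : Prop := s.1 ⊆ t.1 ∧ t.2 ⊆ s.2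

/-- The reverse orientation of an oriented separation. -/
def swapSep {V : Type*} (s : Set V × Set V) : Set V × Set V := (s.2, s.1)

/-- Two (unordered) separations, given by representative orientations, are
nested: they have comparable orientations. -/
def NestedSep {V : Type*} (s t : Set V × Set V) : Prop :=
  osLE s t ∨ osLE t s ∨ osLE s (swapSep t) ∨ osLE (swapSep s) t

/-- `σ` is an orientation of the set `N` of separations which is a star. -/
def IsStarOrientation {V : Type*} (N σ : Set (Set V × Set V)) : Prop :=
  (∀ s ∈ N, s ∈ σ ∨ swapSep s ∈ σ) ∧
  (∀ s ∈ N, ¬ (s ∈ σ ∧ swapSep s ∈ σ)) ∧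
  (∀ t ∈ σ, t ∈ N ∨ swapSep t ∈ N) ∧
  (∀ s ∈ σ, ∀ t ∈ σ, s ≠ t → osLE s (swapSep t))

/-- The set `N` of unitary compound-separations is faithful to the
compound-cutvertex `w` in `G`. -/
def FaithfulToVert {V : Type*} (G : SimpleGraph V) (N : Set (Set V × Set V)) (w : V) : Prop :=
  (∃ σ, IsStarOrientation {s ∈ N | s.1 ∩ s.2 = {w}} σ) ∧
  ∀ u v : V, (∃ A B, IsUnitaryCSep G A B w ∧ SepPair A B u v) →
    ∃ s ∈ N, s.1 ∩ s.2 = {w} ∧ SepPair s.1 s.2 u v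

/-- The set `N` of unitary compound-separations is faithful to `G`. -/
def FaithfulSet {V : Type*} (G : SimpleGraph V) (N : Set (Set V × Set V)) : Prop :=
  ∀ w : V, IsCompoundCutvertex G w → FaithfulToVert G N w

/-- A set of graphs is typical for the class of infinitely edge-connected
graphs with regard to the topological minor relation. -/
def TypicalTopMinor (𝓗 : Set (Σ V : Type, SimpleGraph V)) : Prop :=
  ∀ (W : Type) (G : SimpleGraph W), InfEdgeConn G → ∃ H ∈ 𝓗, TopMinor H.2 G

namespace NotImm

open SimpleGraph


/-! ### Generic walk lemmas -/

lemma mem_support_of_mem_edge {V : Type*} {G : SimpleGraph V} {a b : V} {W : G.Walk a b}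
    {e : Sym2 V} (he : e ∈ W.edges) {v : V} (hv : v ∈ e) : v ∈ W.support := by
  induction e with
  | _ x y =>
    rcases Sym2.mem_iff.mp hv with rfl | rfl
    · exact W.fst_mem_support_of_mem_edges he
    · exact W.snd_mem_support_of_mem_edges he

/-- If a walk starts strictly below `c` (w.r.t. `f`), ends strictly above `c`, and no
vertex on it has `f`-value `c`, then some edge of it strictly crosses `c`. -/
lemma walk_cross {V : Type*} {G : SimpleGraph V} (f : V → ℚ) (c : ℚ) :
    ∀ {s t : V} (W : G.Walk s t), (∀ v ∈ W.support, f v ≠ c) → f s < c → c < f t →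
      ∃ u v, G.Adj u v ∧ s(u, v) ∈ W.edges ∧ f u < c ∧ c < f v := by
  intro s t W
  induction W with
  | nil => intro _ h1 h2; exact absurd (h1.trans h2) (lt_irrefl _)
  | @cons a b t h p ih =>
    intro hsup hs ht
    rcases (hsup b (by simp)).lt_or_gt with hb | hb
    · obtain ⟨u, v, h1, h2, h3, h4⟩ := ih (fun v hv => hsup v (by simp [hv])) hb ht
      exact ⟨u, v, h1, by simp [h2], h3, h4⟩
    · exact ⟨a, b, h, by simp, hs, hb⟩

/-! ### Crossing edges in the halved Farey graph are finitely many -/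

/-- A dyadic vertex (with truncation to make it total). -/
def dy (n k : ℕ) : DyadicSet :=
  ⟨((min k (2 ^ n) : ℕ) : ℚ) / 2 ^ n, ⟨n, min k (2 ^ n), min_le_right _ _, rfl⟩⟩

/-- The set of edges of the halved Farey graph strictly crossing the value of `w`. -/
def Cross (w : DyadicSet) : Set (Sym2 DyadicSet) :=
  {e | ∃ a b : DyadicSet, e = s(a, b) ∧ halvedFarey.Adj a b ∧ (a : ℚ) < (w : ℚ) ∧ (w : ℚ) < (b : ℚ)}

lemma cross_finite (w : DyadicSet) : (Cross w).Finite := by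
  obtain ⟨N, K, hK, hw⟩ := w.2
  apply Set.Finite.subset (Set.Finite.image
    (f := fun p : ℕ × ℕ => s(dy p.1 p.2, dy p.1 (p.2 + 1)))
    ((Set.finite_Iio N).prod (Set.finite_Iio (2 ^ N))))
  rintro e ⟨a, b, rfl, hadj, ha, hb⟩
  obtain ⟨hne, n, k, hk, hcase⟩ := hadj
  have h2n : (0 : ℚ) < 2 ^ n := by positivity
  have h2N : (0 : ℚ) < 2 ^ N := by positivity
  have hab : (a : ℚ) < (b : ℚ) := ha.trans hb
  have hcase' : (a : ℚ) = (k : ℚ) / 2 ^ n ∧ (b : ℚ) = ((k : ℚ) + 1) / 2 ^ n := by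
    rcases hcase with h | h
    · exact h
    · exfalso
      have : ((k : ℚ) + 1) / 2 ^ n < (k : ℚ) / 2 ^ n := by
        rw [h.1, h.2] at hab; exact hab
      rw [div_lt_div_iff₀ h2n h2n] at this
      nlinarith
  obtain ⟨hA, hB⟩ := hcase'
  -- n < N
  have hnN : n < N := by
    by_contra hcon
    push_neg at hcon
    have hsplit : (2 : ℚ) ^ n = 2 ^ N * 2 ^ (n - N) := by
      rw [← pow_add]; congr 1; omega
    have h2m : (0 : ℚ) < 2 ^ (n - N) := by positivity
    have ha' : (k : ℚ) / 2 ^ n < (K : ℚ) / 2 ^ N := by rw [← hA, ← hw]; exact ha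
    have hb' : (K : ℚ) / 2 ^ N < ((k : ℚ) + 1) / 2 ^ n := by rw [← hB, ← hw]; exact hb
    rw [div_lt_div_iff₀ h2n h2N] at ha'
    rw [div_lt_div_iff₀ h2N h2n] at hb'
    have h1 : (k : ℚ) < (K : ℚ) * 2 ^ (n - N) := by nlinarith
    have h2 : (K : ℚ) * 2 ^ (n - N) < (k : ℚ) + 1 := by nlinarith
    have h1' : k < K * 2 ^ (n - N) := by exact_mod_cast h1
    have h2' : K * 2 ^ (n - N) < k + 1 := by exact_mod_cast h2
    omega
  have hk2N : k + 1 ≤ 2 ^ N := le_trans hk (Nat.pow_le_pow_right (by norm_num) hnN.le)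
  refine ⟨(n, k), ⟨Set.mem_Iio.mpr hnN, Set.mem_Iio.mpr (by omega)⟩, ?_⟩
  have hdy1 : dy n k = a := Subtype.ext (by
    simp only [dy, min_eq_left (show k ≤ 2 ^ n by omega)]
    exact hA.symm)
  have hdy2 : dy n (k + 1) = b := Subtype.ext (by
    simp only [dy, min_eq_left hk]
    rw [hB]; push_cast; ring)
  show s(dy n k, dy n (k + 1)) = s(a, b)
  rw [hdy1, hdy2]

/-! ### The central contradiction lemma -/

lemma immersion_cross_contra {VH : Type*} {H : SimpleGraph VH} {α : VH → DyadicSet}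
    {P : ∀ ⦃u v : VH⦄, H.Adj u v → halvedFarey.Walk (α u) (α v)}
    (himm : IsStrongImmersion H halvedFarey α P) (z : VH)
    {ι : Type} [Infinite ι] (u v : ι → VH)
    (hadj : ∀ i, H.Adj (u i) (v i))
    (huz : ∀ i, u i ≠ z) (hvz : ∀ i, v i ≠ z)
    (hlt : ∀ i, ((α (u i)) : ℚ) < ((α z) : ℚ)) (hgt : ∀ i, ((α z) : ℚ) < ((α (v i)) : ℚ))
    (hne : ∀ i j, i ≠ j → s(u i, v i) ≠ s(u j, v j)) : False := by
  have hsup : ∀ i, ∀ x ∈ (P (hadj i)).support, ((x : DyadicSet) : ℚ) ≠ ((α z) : ℚ) := by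
    intro i x hx hc
    have hxz : x = α z := Subtype.ext hc
    rcases himm.2.2.2 (hadj i) x hx ⟨z, hxz.symm⟩ with h | h
    · exact huz i (himm.1 (hxz.symm.trans h)).symm
    · exact hvz i (himm.1 (hxz.symm.trans h)).symm
  have key : ∀ i : ι, ∃ a b : DyadicSet, halvedFarey.Adj a b ∧
      s(a, b) ∈ (P (hadj i)).edges ∧ (a : ℚ) < ((α z) : ℚ) ∧ ((α z) : ℚ) < (b : ℚ) :=
    fun i => walk_cross (fun x : DyadicSet => (x : ℚ)) ((α z) : ℚ) (P (hadj i))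
      (hsup i) (hlt i) (hgt i)
  choose A B hAB hmem hA hB using key
  have hfin := (cross_finite (α z)).to_subtype
  obtain ⟨i, j, hij, hgij⟩ := Finite.exists_ne_map_eq_of_infinite
    (fun i : ι => (⟨s(A i, B i), A i, B i, rfl, hAB i, hA i, hB i⟩ : ↥(Cross (α z))))
  have hsym : s(A i, B i) = s(A j, B j) := congrArg Subtype.val hgij
  exact himm.2.2.1 (hadj i) (hadj j) (hne i j hij) (s(A i, B i)) (hmem i) (hsym ▸ hmem j)



/-! ### Farey graph: rational vertices and adjacency from determinants -/

def vx (a b : ℤ) : Option ℚ := some ((a : ℚ) / (b : ℚ))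

lemma coprime_of_det₁ {a b c d : ℤ} (h : a * d - b * c = -1) :
    Nat.Coprime a.natAbs b.natAbs := by
  have h1 : (Int.gcd a b : ℤ) ∣ 1 := by
    have hd1 : (Int.gcd a b : ℤ) ∣ a * d := (Int.gcd_dvd_left (a := a) (b := b)).mul_right d
    have hd2 : (Int.gcd a b : ℤ) ∣ b * c := (Int.gcd_dvd_right (a := a) (b := b)).mul_right c
    have := dvd_sub hd1 hd2
    rw [h] at this
    exact (dvd_neg.mp this)
  have h2 : Int.gcd a b ∣ 1 := by exact_mod_cast h1
  exact Nat.dvd_one.mp h2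

lemma coprime_of_det₂ {a b c d : ℤ} (h : a * d - b * c = -1) :
    Nat.Coprime c.natAbs d.natAbs := by
  have h1 : (Int.gcd c d : ℤ) ∣ 1 := by
    have hd1 : (Int.gcd c d : ℤ) ∣ a * d := ((Int.gcd_dvd_right (a := c) (b := d)).mul_left a)
    have hd2 : (Int.gcd c d : ℤ) ∣ b * c := ((Int.gcd_dvd_left (a := c) (b := d)).mul_left b)
    have := dvd_sub hd1 hd2
    rw [h] at this
    exact (dvd_neg.mp this)
  have h2 : Int.gcd c d ∣ 1 := by exact_mod_cast h1
  exact Nat.dvd_one.mp h2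

lemma adj_vx {a b c d : ℤ} (hb : 0 < b) (hd : 0 < d) (h : a * d - b * c = -1) :
    fareyGraph.Adj (vx a b) (vx c d) := by
  have h1 : ((a : ℚ) / b).num = a := Rat.num_div_eq_of_coprime hb (coprime_of_det₁ h)
  have h2 : (((a : ℚ) / b).den : ℤ) = b := Rat.den_div_eq_of_coprime hb (coprime_of_det₁ h)
  have h3 : ((c : ℚ) / d).num = c := Rat.num_div_eq_of_coprime hd (coprime_of_det₂ h)
  have h4 : (((c : ℚ) / d).den : ℤ) = d := Rat.den_div_eq_of_coprime hd (coprime_of_det₂ h)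
  show fareyAdj (some ((a : ℚ) / b)) (some ((c : ℚ) / d))
  show _ ∨ _
  right
  rw [h1, h2, h3, h4]
  linarith

lemma adj_inf (m : ℤ) : fareyGraph.Adj none (some ((m : ℤ) : ℚ)) := by
  show fareyAdj none (some ((m : ℤ) : ℚ))
  show Rat.den _ = 1
  exact Rat.den_intCast m

/-! ### Rational inequality helpers -/

lemma q_div_lt {a b c d : ℤ} (hb : 0 < b) (hd : 0 < d) (h : a * d < c * b) :
    (a : ℚ) / b < (c : ℚ) / d := by
  rw [div_lt_div_iff₀ (by exact_mod_cast hb) (by exact_mod_cast hd)]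
  exact_mod_cast h

/-! ### Stern–Brocot walks -/

def sbWalk : ℕ → (a b c d : ℤ) → 0 < b → 0 < d → a * d - b * c = -1 →
    fareyGraph.Walk (vx a b) (vx c d)
  | 0, a, b, c, d, hb, hd, h => Walk.cons (adj_vx hb hd h) Walk.nil
  | n+1, a, b, c, d, hb, hd, h =>
      (sbWalk n a b (a+c) (b+d) hb (by omega) (by linear_combination h)).append
      (sbWalk n (a+c) (b+d) c d (by omega) hd (by linear_combination h))

lemma sbWalk_support : ∀ (n : ℕ) (a b c d : ℤ) (hb : 0 < b) (hd : 0 < d)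
    (h : a * d - b * c = -1) (x : Option ℚ), x ∈ (sbWalk n a b c d hb hd h).support →
    ∃ q : ℚ, x = some q ∧ (a : ℚ) / b ≤ q ∧ q ≤ (c : ℚ) / d := by
  intro n
  induction n with
  | zero =>
    intro a b c d hb hd h x hx
    have hlo : (a : ℚ) / b ≤ (c : ℚ) / d :=
      (q_div_lt hb hd (by have := mul_comm b c; linarith)).le
    rw [show sbWalk 0 a b c d hb hd h = Walk.cons (adj_vx hb hd h) Walk.nil from rfl] at hx
    simp only [Walk.support_cons, Walk.support_nil, List.mem_cons, List.mem_singleton] at hx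
    rcases hx with rfl | hx
    · exact ⟨(a : ℚ) / b, rfl, le_refl _, hlo⟩
    · rcases hx with rfl | hx
      · exact ⟨(c : ℚ) / d, rfl, hlo, le_refl _⟩
      · simp at hx
  | succ n ih =>
    intro a b c d hb hd h x hx
    have hmidhi : ((a : ℤ) + c : ℤ) * d < c * (b + d) := by
      have := mul_comm b c; linarith
    have hlomid : a * (b + d) < ((a : ℤ) + c) * b := by
      have := mul_comm b c; linarith
    rw [show sbWalk (n+1) a b c d hb hd h =
      (sbWalk n a b (a+c) (b+d) hb (by omega) (by linear_combination h)).append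
      (sbWalk n (a+c) (b+d) c d (by omega) hd (by linear_combination h)) from rfl] at hx
    rw [Walk.mem_support_append_iff] at hx
    rcases hx with hx | hx
    · obtain ⟨q, rfl, h1, h2⟩ := ih a b (a+c) (b+d) hb (by omega) (by linear_combination h) _ hx
      refine ⟨q, rfl, h1, h2.trans ?_⟩
      have : ((a + c : ℤ) : ℚ) / ((b + d : ℤ) : ℚ) ≤ (c : ℚ) / d :=
        (q_div_lt (by omega) hd hmidhi).le
      exact_mod_cast this
    · obtain ⟨q, rfl, h1, h2⟩ := ih (a+c) (b+d) c d (by omega) hd (by linear_combination h) _ hx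
      refine ⟨q, rfl, le_trans ?_ h1, h2⟩
      have : (a : ℚ) / b ≤ ((a + c : ℤ) : ℚ) / ((b + d : ℤ) : ℚ) :=
        (q_div_lt hb (by omega) hlomid).le
      exact_mod_cast this

lemma sbWalk_EB {n : ℕ} {a b c d : ℤ} {hb : 0 < b} {hd : 0 < d}
    {h : a * d - b * c = -1} {e : Sym2 (Option ℚ)}
    (he : e ∈ (sbWalk n a b c d hb hd h).edges) :
    ∀ v ∈ e, ∃ q : ℚ, v = some q ∧ (a : ℚ) / b ≤ q ∧ q ≤ (c : ℚ) / d :=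
  fun _ hv => sbWalk_support n a b c d hb hd h _ (mem_support_of_mem_edge he hv)

/-- Separation: an edge cannot have all its endpoints in two essentially disjoint
intervals. -/
lemma edge_sep {e : Sym2 (Option ℚ)} (hE : e ∈ fareyGraph.edgeSet)
    {lo hi lo' hi' : ℚ} (hsep : hi ≤ lo')
    (h1 : ∀ v ∈ e, ∃ q : ℚ, v = some q ∧ lo ≤ q ∧ q ≤ hi)
    (h2 : ∀ v ∈ e, ∃ q : ℚ, v = some q ∧ lo' ≤ q ∧ q ≤ hi') : False := by
  induction e with
  | _ x y =>
    have hadj : fareyGraph.Adj x y := hE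
    obtain ⟨qx, rfl, hx1, hx2⟩ := h1 x (Sym2.mem_mk_left _ _)
    obtain ⟨qy, rfl, hy1, hy2⟩ := h1 y (Sym2.mem_mk_right _ _)
    obtain ⟨qx', hqx', hx1', hx2'⟩ := h2 (some qx) (Sym2.mem_mk_left _ _)
    obtain ⟨qy', hqy', hy1', hy2'⟩ := h2 (some qy) (Sym2.mem_mk_right _ _)
    have e1 : qx = qx' := by injection hqx'
    have e2 : qy = qy' := by injection hqy'
    subst e1; subst e2
    have : qx = qy := by linarith
    exact hadj.ne (by rw [this])

lemma sbWalk_edges_disj : ∀ (m n : ℕ), m < n → ∀ (a b c d : ℤ) (hb : 0 < b) (hd : 0 < d)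
    (h : a * d - b * c = -1), ∀ e ∈ (sbWalk m a b c d hb hd h).edges,
    e ∉ (sbWalk n a b c d hb hd h).edges := by
  intro m
  induction m with
  | zero =>
    intro n hn a b c d hb hd h e he hen
    obtain ⟨n', rfl⟩ : ∃ n', n = n' + 1 := ⟨n - 1, by omega⟩
    have he' : e = s(vx a b, vx c d) := by
      rw [show sbWalk 0 a b c d hb hd h = Walk.cons (adj_vx hb hd h) Walk.nil from rfl] at he
      simpa using he
    subst he'
    rw [show sbWalk (n'+1) a b c d hb hd h =
      (sbWalk n' a b (a+c) (b+d) hb (by omega) (by linear_combination h)).append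
      (sbWalk n' (a+c) (b+d) c d (by omega) hd (by linear_combination h)) from rfl] at hen
    rw [Walk.edges_append, List.mem_append] at hen
    have hmidhi : ((a : ℤ) + c) * d < c * (b + d) := by have := mul_comm b c; linarith
    have hlomid : a * (b + d) < ((a : ℤ) + c) * b := by have := mul_comm b c; linarith
    rcases hen with hen | hen
    · obtain ⟨q, hq, h1, h2⟩ := sbWalk_EB hen (vx c d) (Sym2.mem_mk_right _ _)
      have hq' : (c : ℚ) / d = q := by injection hq
      have : ((a + c : ℤ) : ℚ) / ((b + d : ℤ) : ℚ) < (c : ℚ) / d :=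
        q_div_lt (by omega) hd hmidhi
      rw [← hq'] at h2
      push_cast at this h2
      linarith
    · obtain ⟨q, hq, h1, h2⟩ := sbWalk_EB hen (vx a b) (Sym2.mem_mk_left _ _)
      have hq' : (a : ℚ) / b = q := by injection hq
      have : (a : ℚ) / b < ((a + c : ℤ) : ℚ) / ((b + d : ℤ) : ℚ) :=
        q_div_lt hb (by omega) hlomid
      rw [← hq'] at h1
      push_cast at this h1
      linarith
  | succ m ih =>
    intro n hn a b c d hb hd h e he hen
    obtain ⟨n', rfl⟩ : ∃ n', n = n' + 1 := ⟨n - 1, by omega⟩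
    rw [show sbWalk (m+1) a b c d hb hd h =
      (sbWalk m a b (a+c) (b+d) hb (by omega) (by linear_combination h)).append
      (sbWalk m (a+c) (b+d) c d (by omega) hd (by linear_combination h)) from rfl] at he
    rw [show sbWalk (n'+1) a b c d hb hd h =
      (sbWalk n' a b (a+c) (b+d) hb (by omega) (by linear_combination h)).append
      (sbWalk n' (a+c) (b+d) c d (by omega) hd (by linear_combination h)) from rfl] at hen
    rw [Walk.edges_append, List.mem_append] at he hen
    rcases he with he | he <;> rcases hen with hen | hen
    · exact ih n' (by omega) _ _ _ _ _ _ _ e he hen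
    · exact edge_sep (Walk.edges_subset_edgeSet _ he) (le_refl _) (sbWalk_EB he) (sbWalk_EB hen)
    · exact edge_sep (Walk.edges_subset_edgeSet _ he) (le_refl _) (sbWalk_EB hen) (sbWalk_EB he)
    · exact ih n' (by omega) _ _ _ _ _ _ _ e he hen



lemma sb_det (b : ℤ) : b * 1 - 1 * (b + 1) = -1 := by ring

/-- A walk from `a` up to `a + t` through unit intervals, each subdivided at depth `d`. -/
def oneChain (d : ℕ) : (a : ℤ) → (t : ℕ) → fareyGraph.Walk (some ((a : ℤ) : ℚ)) (some ((a + (t : ℕ) : ℤ) : ℚ))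
  | a, 0 => Walk.nil.copy rfl (by norm_num)
  | a, t+1 =>
    (((sbWalk d a 1 (a+1) 1 one_pos one_pos (sb_det a)).copy
        (by simp [vx]) (by simp [vx])).append
      (oneChain d (a+1) t)).copy rfl (by congr 2; push_cast; ring)

lemma oneChain_support (d : ℕ) : ∀ (t : ℕ) (a : ℤ), ∀ x ∈ (oneChain d a t).support,
    ∃ q : ℚ, x = some q ∧ (a : ℚ) ≤ q ∧ q ≤ (a : ℚ) + (t : ℚ) := by
  intro t
  induction t with
  | zero =>
    intro a x hx
    rw [show oneChain d a 0 = Walk.nil.copy rfl (by norm_num) from rfl] at hx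
    rw [Walk.support_copy] at hx
    simp only [Walk.support_nil, List.mem_singleton] at hx
    exact ⟨(a : ℚ), hx, le_refl _, by norm_num⟩
  | succ t ih =>
    intro a x hx
    rw [show oneChain d a (t+1) =
      (((sbWalk d a 1 (a+1) 1 one_pos one_pos (sb_det a)).copy
        (by simp [vx]) (by simp [vx])).append
      (oneChain d (a+1) t)).copy rfl (by congr 2; push_cast; ring) from rfl] at hx
    rw [Walk.support_copy, Walk.mem_support_append_iff] at hx
    rcases hx with hx | hx
    · rw [Walk.support_copy] at hx
      obtain ⟨q, rfl, h1, h2⟩ := sbWalk_support d a 1 (a+1) 1 one_pos one_pos (sb_det a) _ hx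
      simp only [Int.cast_one, div_one] at h1 h2
      refine ⟨q, rfl, by exact_mod_cast h1, le_trans (by exact_mod_cast h2) ?_⟩
      push_cast
      linarith [Nat.cast_nonneg (α := ℚ) t]
    · obtain ⟨q, rfl, h1, h2⟩ := ih (a+1) _ hx
      push_cast at h1 h2 ⊢
      exact ⟨q, rfl, by linarith, by linarith⟩

lemma oneChain_edges (d : ℕ) : ∀ (t : ℕ) (a : ℤ), ∀ e ∈ (oneChain d a t).edges,
    ∃ b : ℤ, a ≤ b ∧ b + 1 ≤ a + t ∧
      e ∈ (sbWalk d b 1 (b+1) 1 one_pos one_pos (sb_det b)).edges := by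
  intro t
  induction t with
  | zero =>
    intro a e he
    rw [show oneChain d a 0 = Walk.nil.copy rfl (by norm_num) from rfl] at he
    rw [Walk.edges_copy] at he
    simp at he
  | succ t ih =>
    intro a e he
    rw [show oneChain d a (t+1) =
      (((sbWalk d a 1 (a+1) 1 one_pos one_pos (sb_det a)).copy
        (by simp [vx]) (by simp [vx])).append
      (oneChain d (a+1) t)).copy rfl (by congr 2; push_cast; ring) from rfl] at he
    rw [Walk.edges_copy, Walk.edges_append, List.mem_append, Walk.edges_copy] at he
    rcases he with he | he
    · exact ⟨a, le_refl _, by omega, he⟩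
    · obtain ⟨b, h1, h2, h3⟩ := ih (a+1) e he
      exact ⟨b, by omega, by omega, h3⟩

/-- The infinitely many pairwise edge-disjoint walks from `∞` to `n` avoiding `z`. -/
lemma farey_family (n z : ℤ) (hzn : z ≠ n) :
    ∃ W : ℕ → fareyGraph.Walk none (some ((n : ℤ) : ℚ)),
      (∀ j j', j ≠ j' → EdgeDisjW (W j) (W j')) ∧
      (∀ j, ∀ v ∈ (W j).support, v ≠ some ((z : ℤ) : ℚ)) := by
  -- helper for chain edge-disjointness
  have chainDisj : ∀ (j j' : ℕ) (a a' : ℤ) (t t' : ℕ), j ≠ j' → ∀ e,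
      e ∈ (oneChain j a t).edges → e ∈ (oneChain j' a' t').edges → False := by
    intro j j' a a' t t' hjj e he he'
    obtain ⟨b, hb1, hb2, hb3⟩ := oneChain_edges j t a e he
    obtain ⟨b', hb1', hb2', hb3'⟩ := oneChain_edges j' t' a' e he'
    rcases lt_trichotomy b b' with hbb | hbb | hbb
    · refine edge_sep (Walk.edges_subset_edgeSet _ hb3) ?_ (sbWalk_EB hb3) (sbWalk_EB hb3')
      simp only [Int.cast_one, div_one]
      exact_mod_cast (by omega : (b : ℤ) + 1 ≤ b')
    · subst hbb
      rcases hjj.lt_or_gt with hj | hj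
      · exact sbWalk_edges_disj j j' hj b 1 (b+1) 1 one_pos one_pos (sb_det b) e hb3 hb3'
      · exact sbWalk_edges_disj j' j hj b 1 (b+1) 1 one_pos one_pos (sb_det b) e hb3' hb3
    · refine edge_sep (Walk.edges_subset_edgeSet _ hb3) ?_ (sbWalk_EB hb3') (sbWalk_EB hb3)
      simp only [Int.cast_one, div_one]
      exact_mod_cast (by omega : (b' : ℤ) + 1 ≤ b)
  have chainSome : ∀ (j : ℕ) (a : ℤ) (t : ℕ) e, e ∈ (oneChain j a t).edges →
      ∀ v ∈ e, ∃ q : ℚ, v = some q := by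
    intro j a t e he v hv
    obtain ⟨q, hq, -, -⟩ := oneChain_support j t a v (mem_support_of_mem_edge he hv)
    exact ⟨q, hq⟩
  rcases hzn.lt_or_gt with hz | hz
  · -- z < n : use walks through [n, n+j+1]
    refine ⟨fun j => Walk.cons (adj_inf (n + ((j : ℕ) + 1 : ℕ))) (oneChain j n (j+1)).reverse,
      ?_, ?_⟩
    · intro j j' hjj e he
      rw [Walk.edges_cons, List.mem_cons] at he
      intro he'
      rw [Walk.edges_cons, List.mem_cons] at he'
      rw [Walk.edges_reverse, List.mem_reverse] at he he'
      rcases he with he | he <;> rcases he' with he' | he'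
      · subst he
        rw [Sym2.eq_iff] at he'
        rcases he' with ⟨-, h2⟩ | ⟨h1, -⟩
        · have : (n + ((j : ℕ) + 1 : ℕ) : ℤ) = (n + ((j' : ℕ) + 1 : ℕ) : ℤ) := by
            have := Option.some.inj h2
            exact_mod_cast this
          omega
        · exact Option.some_ne_none _ h1.symm
      · subst he
        obtain ⟨q, hq⟩ := chainSome j' n (j'+1) _ he' none (Sym2.mem_mk_left _ _)
        exact Option.some_ne_none _ hq.symm
      · subst he'
        obtain ⟨q, hq⟩ := chainSome j n (j+1) _ he none (Sym2.mem_mk_left _ _)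
        exact Option.some_ne_none _ hq.symm
      · exact chainDisj j j' n n (j+1) (j'+1) hjj e he he'
    · intro j v hv
      rw [Walk.support_cons, List.mem_cons] at hv
      rcases hv with rfl | hv
      · exact fun h => Option.some_ne_none _ h.symm
      · rw [Walk.support_reverse, List.mem_reverse] at hv
        obtain ⟨q, rfl, h1, -⟩ := oneChain_support j (j+1) n v hv
        intro hcon
        have : (z : ℚ) = q := (Option.some.inj hcon).symm
        rw [← this] at h1
        have : (n : ℤ) ≤ z := by exact_mod_cast h1
        omega
  · -- z > n : use walks through [n-j-1, n]
    refine ⟨fun j => Walk.cons (adj_inf (n - ((j : ℕ) + 1 : ℕ)))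
      ((oneChain j (n - ((j : ℕ) + 1 : ℕ)) (j+1)).copy rfl (by congr 2; push_cast; ring)),
      ?_, ?_⟩
    · intro j j' hjj e he
      rw [Walk.edges_cons, List.mem_cons, Walk.edges_copy] at he
      intro he'
      rw [Walk.edges_cons, List.mem_cons, Walk.edges_copy] at he'
      rcases he with he | he <;> rcases he' with he' | he'
      · subst he
        rw [Sym2.eq_iff] at he'
        rcases he' with ⟨-, h2⟩ | ⟨h1, -⟩
        · have : (n - ((j : ℕ) + 1 : ℕ) : ℤ) = (n - ((j' : ℕ) + 1 : ℕ) : ℤ) := by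
            have := Option.some.inj h2
            exact_mod_cast this
          omega
        · exact Option.some_ne_none _ h1.symm
      · subst he
        obtain ⟨q, hq⟩ := chainSome j' _ (j'+1) _ he' none (Sym2.mem_mk_left _ _)
        exact Option.some_ne_none _ hq.symm
      · subst he'
        obtain ⟨q, hq⟩ := chainSome j _ (j+1) _ he none (Sym2.mem_mk_left _ _)
        exact Option.some_ne_none _ hq.symm
      · exact chainDisj j j' _ _ (j+1) (j'+1) hjj e he he'
    · intro j v hv
      rw [Walk.support_cons, List.mem_cons, Walk.support_copy] at hv
      rcases hv with rfl | hv
      · exact fun h => Option.some_ne_none _ h.symm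
      · obtain ⟨q, rfl, -, h2⟩ := oneChain_support j (j+1) _ v hv
        intro hcon
        have hq : (z : ℚ) = q := (Option.some.inj hcon).symm
        rw [← hq] at h2
        have : (z : ℚ) ≤ (n : ℚ) := by push_cast at h2 ⊢; linarith
        have : z ≤ n := by exact_mod_cast this
        omega



lemma exists_mid3 (f : ℕ → ℚ) (h01 : f 0 ≠ f 1) (h02 : f 0 ≠ f 2) (h12 : f 1 ≠ f 2) :
    ∃ l m r : ℕ, l < 3 ∧ m < 3 ∧ r < 3 ∧ f l < f m ∧ f m < f r := by
  rcases h01.lt_or_gt with h | h <;> rcases h02.lt_or_gt with h' | h' <;>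
    rcases h12.lt_or_gt with h'' | h''
  · exact ⟨0, 1, 2, by omega, by omega, by omega, h, h''⟩
  · exact ⟨0, 2, 1, by omega, by omega, by omega, h', h''⟩
  · exact absurd rfl (by linarith : f 0 ≠ f 0)
  · exact ⟨2, 0, 1, by omega, by omega, by omega, h', h⟩
  · exact ⟨1, 0, 2, by omega, by omega, by omega, h, h'⟩
  · exact absurd rfl (by linarith : f 0 ≠ f 0)
  · exact ⟨1, 2, 0, by omega, by omega, by omega, h'', h'⟩
  · exact ⟨2, 1, 0, by omega, by omega, by omega, h'', h⟩

lemma pick_pair (g : ℤ → ℚ) (B : ℚ) (h01 : g 0 ≠ g 1) (h02 : g 0 ≠ g 2) (h12 : g 1 ≠ g 2)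
    (hB0 : g 0 ≠ B) (hB1 : g 1 ≠ B) (hB2 : g 2 ≠ B) :
    ∃ zz nn : ℤ, zz ≠ nn ∧
      ((B < g zz ∧ g zz < g nn) ∨ (g nn < g zz ∧ g zz < B)) := by
  have pair : ∀ x y : ℤ, x ≠ y → g x ≠ g y →
      ((B < g x ∧ B < g y) ∨ (g x < B ∧ g y < B)) →
      ∃ zz nn : ℤ, zz ≠ nn ∧ ((B < g zz ∧ g zz < g nn) ∨ (g nn < g zz ∧ g zz < B)) := by
    intro x y hxy hgxy hside
    rcases hgxy.lt_or_gt with h | h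
    · rcases hside with ⟨h1, h2⟩ | ⟨h1, h2⟩
      · exact ⟨x, y, hxy, Or.inl ⟨h1, h⟩⟩
      · exact ⟨y, x, hxy.symm, Or.inr ⟨h, h2⟩⟩
    · rcases hside with ⟨h1, h2⟩ | ⟨h1, h2⟩
      · exact ⟨y, x, hxy.symm, Or.inl ⟨h2, h⟩⟩
      · exact ⟨x, y, hxy, Or.inr ⟨h, h1⟩⟩
  rcases hB0.lt_or_gt with h0 | h0 <;> rcases hB1.lt_or_gt with h1 | h1 <;>
    rcases hB2.lt_or_gt with h2 | h2
  · exact pair 0 1 (by norm_num) h01 (Or.inr ⟨h0, h1⟩)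
  · exact pair 0 1 (by norm_num) h01 (Or.inr ⟨h0, h1⟩)
  · exact pair 0 2 (by norm_num) h02 (Or.inr ⟨h0, h2⟩)
  · exact pair 1 2 (by norm_num) h12 (Or.inl ⟨h1, h2⟩)
  · exact pair 1 2 (by norm_num) h12 (Or.inr ⟨h1, h2⟩)
  · exact pair 0 2 (by norm_num) h02 (Or.inl ⟨h0, h2⟩)
  · exact pair 0 1 (by norm_num) h01 (Or.inl ⟨h0, h1⟩)
  · exact pair 0 1 (by norm_num) h01 (Or.inl ⟨h0, h1⟩)

end NotImm

open NotImm

/-- neither `K^{ℵ₀}` nor the Farey graph is strongly immersed in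
the halved Farey graph. -/
theorem not_immersed_in_halvedFarey :
    ¬ StronglyImmersed (⊤ : SimpleGraph ℕ) halvedFarey ∧
    ¬ StronglyImmersed fareyGraph halvedFarey := by
  constructor
  · rintro ⟨α, P, himm⟩
    have hfinj : ∀ {i j : ℕ}, ((α i : DyadicSet) : ℚ) = ((α j : DyadicSet) : ℚ) → i = j :=
      fun h => himm.1 (Subtype.ext h)
    obtain ⟨l, m, r, hl3, hm3, hr3, hlm, hmr⟩ :=
      exists_mid3 (fun i => ((α i : DyadicSet) : ℚ))
        (fun h => absurd (hfinj h) (by omega)) (fun h => absurd (hfinj h) (by omega))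
        (fun h => absurd (hfinj h) (by omega))
    set S : Set ℕ := {y | 2 < y ∧ ((α m : DyadicSet) : ℚ) < ((α y : DyadicSet) : ℚ)} with hS
    set S' : Set ℕ := {y | 2 < y ∧ ((α y : DyadicSet) : ℚ) < ((α m : DyadicSet) : ℚ)} with hS'
    have hsub : Set.Ioi 2 ⊆ S ∪ S' := by
      intro y hy
      have hy2 : 2 < y := hy
      have hym : ((α y : DyadicSet) : ℚ) ≠ ((α m : DyadicSet) : ℚ) :=
        fun h => by have := hfinj h; omega
      rcases hym.lt_or_gt with h | h
      · right; exact ⟨hy2, h⟩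
      · left; exact ⟨hy2, h⟩
    have hSS : S.Infinite ∨ S'.Infinite := by
      by_contra hcon
      push_neg at hcon
      obtain ⟨hc1, hc2⟩ := hcon
      exact Set.not_infinite.mpr (hc1.union hc2) ((Set.Ioi_infinite 2).mono hsub)
    rcases hSS with hInf | hInf
    · haveI := hInf.to_subtype
      have hA : ∀ i : ↥S, (⊤ : SimpleGraph ℕ).Adj l (i : ℕ) := by
        intro i
        rw [SimpleGraph.top_adj]
        have := i.2.1
        omega
      have hUZ : l ≠ m := fun h => by rw [h] at hlm; exact lt_irrefl _ hlm
      have hVZ : ∀ i : ↥S, (i : ℕ) ≠ m := fun i => by have := i.2.1; omega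
      have hLT : ∀ i : ↥S, ((α l : DyadicSet) : ℚ) < ((α m : DyadicSet) : ℚ) := fun _ => hlm
      have hGT : ∀ i : ↥S, ((α m : DyadicSet) : ℚ) < ((α (i : ℕ) : DyadicSet) : ℚ) :=
        fun i => i.2.2
      have hNE : ∀ i j : ↥S, i ≠ j → s(l, (i : ℕ)) ≠ s(l, (j : ℕ)) := by
        intro i j hij h
        rw [Sym2.eq_iff] at h
        have hi3 := i.2.1
        have hj3 := j.2.1
        have hij' : (i : ℕ) ≠ (j : ℕ) := fun h => hij (Subtype.ext h)
        rcases h with ⟨-, h2⟩ | ⟨h1, h2⟩ <;> omega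
      exact immersion_cross_contra himm m (fun _ : ↥S => l) (fun y : ↥S => (y : ℕ))
        hA (fun _ => hUZ) hVZ hLT hGT hNE
    · haveI := hInf.to_subtype
      have hA : ∀ i : ↥S', (⊤ : SimpleGraph ℕ).Adj (i : ℕ) r := by
        intro i
        rw [SimpleGraph.top_adj]
        have := i.2.1
        omega
      have hUZ : ∀ i : ↥S', (i : ℕ) ≠ m := fun i => by have := i.2.1; omega
      have hVZ : r ≠ m := fun h => by rw [h] at hmr; exact lt_irrefl _ hmr
      have hLT : ∀ i : ↥S', ((α (i : ℕ) : DyadicSet) : ℚ) < ((α m : DyadicSet) : ℚ) :=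
        fun i => i.2.2
      have hGT : ∀ i : ↥S', ((α m : DyadicSet) : ℚ) < ((α r : DyadicSet) : ℚ) := fun _ => hmr
      have hNE : ∀ i j : ↥S', i ≠ j → s((i : ℕ), r) ≠ s((j : ℕ), r) := by
        intro i j hij h
        rw [Sym2.eq_iff] at h
        have hi3 := i.2.1
        have hj3 := j.2.1
        have hij' : (i : ℕ) ≠ (j : ℕ) := fun h => hij (Subtype.ext h)
        rcases h with ⟨h1, h2⟩ | ⟨h1, h2⟩ <;> omega
      exact immersion_cross_contra himm m (fun y : ↥S' => (y : ℕ)) (fun _ : ↥S' => r)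
        hA hUZ (fun _ => hVZ) hLT hGT hNE
  · rintro ⟨α, P, himm⟩
    have hfinj : ∀ {u v : Option ℚ}, ((α u : DyadicSet) : ℚ) = ((α v : DyadicSet) : ℚ) → u = v :=
      fun h => himm.1 (Subtype.ext h)
    obtain ⟨zz, nn, hzn, hcase⟩ := pick_pair (fun i : ℤ => ((α (some ((i : ℤ) : ℚ)) : DyadicSet) : ℚ))
      ((α none : DyadicSet) : ℚ)
      (fun h => by have := hfinj h; simp at this)
      (fun h => by have := hfinj h; simp at this)
      (fun h => by have := hfinj h; simp at this)
      (fun h => by have := hfinj h; simp at this)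
      (fun h => by have := hfinj h; simp at this)
      (fun h => by have := hfinj h; simp at this)
    obtain ⟨W, hW, havoid⟩ := farey_family nn zz hzn
    have hsupne : ∀ j, ∀ v ∈ (W j).support,
        ((α v : DyadicSet) : ℚ) ≠ ((α (some ((zz : ℤ) : ℚ)) : DyadicSet) : ℚ) :=
      fun j v hv h => (havoid j v hv) (hfinj h)
    have key : ∀ j : ℕ, ∃ p q : Option ℚ, fareyGraph.Adj p q ∧ s(p, q) ∈ (W j).edges ∧
        ((α p : DyadicSet) : ℚ) < ((α (some ((zz : ℤ) : ℚ)) : DyadicSet) : ℚ) ∧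
        ((α (some ((zz : ℤ) : ℚ)) : DyadicSet) : ℚ) < ((α q : DyadicSet) : ℚ) := by
      intro j
      rcases hcase with ⟨hc1, hc2⟩ | ⟨hc1, hc2⟩
      · exact walk_cross (fun u => ((α u : DyadicSet) : ℚ)) _ (W j) (hsupne j) hc1 hc2
      · obtain ⟨p, q, ha, hm, h1, h2⟩ := walk_cross (fun u => ((α u : DyadicSet) : ℚ)) _
          (W j).reverse
          (fun v hv => hsupne j v (by rwa [Walk.support_reverse, List.mem_reverse] at hv))
          hc1 hc2
        refine ⟨p, q, ha, ?_, h1, h2⟩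
        rwa [Walk.edges_reverse, List.mem_reverse] at hm
    choose u v hadj hmem hflt hfgt using key
    refine immersion_cross_contra himm (some ((zz : ℤ) : ℚ)) u v hadj
      (fun j => ?_) (fun j => ?_) hflt hfgt (fun j j' hjj h => ?_)
    · exact havoid j (u j) (mem_support_of_mem_edge (hmem j) (Sym2.mem_mk_left _ _))
    · exact havoid j (v j) (mem_support_of_mem_edge (hmem j) (Sym2.mem_mk_right _ _))
    · exact hW j j' hjj _ (hmem j) (h ▸ hmem j')
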